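/- Fix integers n ≥ 1 and j ≥ 1, a real number α ≠ 0, and a real number θ. Then the sum over all j-balanced set partitions π of {1,…,n} × {1,…,j} of the weight (θ/α)^{↑#π} · ∏_{b ∈ π} [ −(−α/j)^{↑(#b/j)} ] · ((#b/j)!)^{j−1} equals (θ/j)^{↑n} · (n!)^{j−1}. (This is the statement that the Chinese-restaurant construction for balanced partitions yields the probability distribution p_n^j(π;α,θ) = (θ/α)^{↑#π} ∏_{b∈π} [−(−α/j)^{↑(#b/j)}] ((#b/j)!)^{j−1} / [(θ/j)^{↑n}(n!)^{j−1}] on j-balanced partitions.) -/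

import Mathlib

open Finset

/-- The rising factorial `x^{↑n} = x(x+1)⋯(x+n−1)`. -/
def risingFactorial (x : ℝ) (n : ℕ) : ℝ := ∏ i ∈ Finset.range n, (x + i)

lemma risingFactorial_succ (x : ℝ) (n : ℕ) :
    risingFactorial x (n + 1) = risingFactorial x n * (x + n) := Finset.prod_range_succ _ _

lemma risingFactorial_one (x : ℝ) : risingFactorial x 1 = x := by
  simp [risingFactorial]


/-- A set partition of `{1,…,n} × {1,…,j}` is `j`-balanced if every block contains an
equal number of elements of each of the `j` types (the type of an element being its
second coordinate). -/
def IsBalanced {n j : ℕ} (π : Finpartition (Finset.univ : Finset (Fin n × Fin j))) : Prop :=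
  ∀ b ∈ π.parts, ∀ t t' : Fin j,
    (b.filter fun p => p.2 = t).card = (b.filter fun p => p.2 = t').card

instance {n j : ℕ} (π : Finpartition (Finset.univ : Finset (Fin n × Fin j))) :
    Decidable (IsBalanced π) := by unfold IsBalanced; infer_instance

namespace CRP


variable {X : Type*} [DecidableEq X] {s : Finset X} {a : X}

lemma not_mem_of_mem_parts (ha : a ∉ s) {π : Finpartition s} {b : Finset X}
    (hb : b ∈ π.parts) : a ∉ b := fun h => ha (π.le hb h)

lemma singleton_not_mem_parts (ha : a ∉ s) (π : Finpartition s) : {a} ∉ π.parts :=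
  fun h => (not_mem_of_mem_parts ha h) (mem_singleton_self a)

/-- Extend a finpartition of `s` by the new singleton block `{a}`. -/
def extSingle (a : X) (ha : a ∉ s) (π : Finpartition s) : Finpartition (insert a s) :=
  π.extend (b := {a}) (by simp [Finset.bot_eq_empty])
    (by simpa using ha) (by rw [sup_eq_union, union_comm, ← insert_eq])

lemma extSingle_parts (ha : a ∉ s) (π : Finpartition s) :
    (extSingle a ha π).parts = insert {a} π.parts := rfl

/-- Extend a finpartition of `s` by adding the new element `a` to the block `b`. -/
def extBlock (a : X) (ha : a ∉ s) (π : Finpartition s) (b : Finset X) :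
    Finpartition (insert a s) :=
  if hb : b ∈ π.parts then
    { parts := insert (insert a b) (π.parts.erase b)
      supIndep := by
        rw [Finset.supIndep_iff_pairwiseDisjoint]
        have hna : ∀ c ∈ π.parts, a ∉ c := fun c hc => not_mem_of_mem_parts ha hc
        rintro x hx y hy hxy
        simp only [coe_insert, Set.mem_insert_iff, mem_coe, Finset.mem_erase] at hx hy
        have hd : ∀ c, c ∈ π.parts → c ≠ b → Disjoint (insert a b) c := by
          intro c hc hcb
          rw [Finset.disjoint_insert_left]
          exact ⟨hna c hc, π.disjoint hb hc (Ne.symm hcb)⟩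
        rcases hx with rfl | ⟨hxb, hx⟩ <;> rcases hy with rfl | ⟨hyb, hy⟩
        · exact absurd rfl hxy
        · exact hd y hy hyb
        · exact (hd x hx hxb).symm
        · exact π.disjoint hx hy hxy
      sup_parts := by
        have h2 : b ⊔ (π.parts.erase b).sup id = s := by
          have h := π.sup_parts
          rw [← Finset.insert_erase hb, Finset.sup_insert] at h
          simpa using h
        rw [Finset.sup_insert, id_eq, sup_eq_union, Finset.insert_union, ← sup_eq_union, h2]
      bot_notMem := by
        intro h
        rcases Finset.mem_insert.1 h with h | h
        · exact (Finset.insert_ne_empty a b) ((Finset.bot_eq_empty ▸ h).symm)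
        · exact π.bot_notMem (Finset.mem_of_mem_erase h) }
  else extSingle a ha π

lemma extBlock_parts (ha : a ∉ s) (π : Finpartition s) {b : Finset X} (hb : b ∈ π.parts) :
    (extBlock a ha π b).parts = insert (insert a b) (π.parts.erase b) := by
  rw [extBlock, dif_pos hb]

/-- Restrict a finpartition of `insert a s` to one of `s` by deleting `a`. -/
def rest (a : X) (ha : a ∉ s) (π' : Finpartition (insert a s)) : Finpartition s :=
  (π'.avoid {a}).copy (by
    ext x
    simp only [Finset.mem_sdiff, Finset.mem_insert, Finset.mem_singleton]
    constructor
    · rintro ⟨h | h, hx⟩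
      · exact absurd h hx
      · exact h
    · intro hx
      exact ⟨Or.inr hx, fun h => ha (h ▸ hx)⟩)

lemma mem_rest_parts (ha : a ∉ s) (π' : Finpartition (insert a s)) (c : Finset X) :
    c ∈ (rest a ha π').parts ↔ ∃ d ∈ π'.parts, d ≠ {a} ∧ d.erase a = c := by
  have : (rest a ha π').parts = (π'.avoid {a}).parts := rfl
  rw [this, Finpartition.mem_avoid]
  refine exists_congr fun d => and_congr_right fun hd => ?_
  have hne : d.Nonempty := π'.nonempty_of_mem_parts hd
  rw [Finset.le_iff_subset, Finset.subset_singleton_iff, ← Finset.erase_eq]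
  constructor
  · rintro ⟨h, rfl⟩
    refine ⟨fun h' => h (Or.inr h'), rfl⟩
  · rintro ⟨h, rfl⟩
    refine ⟨fun h' => ?_, rfl⟩
    rcases h' with h' | h'
    · exact hne.ne_empty h'
    · exact h h'

lemma part_extSingle (ha : a ∉ s) (π : Finpartition s) :
    (extSingle a ha π).part a = {a} :=
  Finpartition.part_eq_of_mem _ (by rw [extSingle_parts]; exact mem_insert_self _ _)
    (mem_singleton_self a)

lemma part_extBlock (ha : a ∉ s) (π : Finpartition s) {b : Finset X} (hb : b ∈ π.parts) :
    (extBlock a ha π b).part a = insert a b :=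
  Finpartition.part_eq_of_mem _ (by rw [extBlock_parts ha π hb]; exact mem_insert_self _ _)
    (mem_insert_self a b)

lemma rest_extSingle (ha : a ∉ s) (π : Finpartition s) :
    rest a ha (extSingle a ha π) = π := by
  apply Finpartition.ext
  ext c
  rw [mem_rest_parts]
  constructor
  · rintro ⟨d, hd, hda, rfl⟩
    rw [extSingle_parts, Finset.mem_insert] at hd
    rcases hd with rfl | hd
    · exact absurd rfl hda
    · rwa [Finset.erase_eq_of_notMem (not_mem_of_mem_parts ha hd)]
  · intro hc
    exact ⟨c, by rw [extSingle_parts]; exact Finset.mem_insert_of_mem hc,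
      fun h => singleton_not_mem_parts ha π (h ▸ hc),
      Finset.erase_eq_of_notMem (not_mem_of_mem_parts ha hc)⟩

lemma insert_ne_singleton (ha : a ∉ s) {π : Finpartition s} {b : Finset X}
    (hb : b ∈ π.parts) : insert a b ≠ {a} := by
  intro h
  have hbe : b.Nonempty := π.nonempty_of_mem_parts hb
  obtain ⟨x, hx⟩ := hbe
  have : x ∈ ({a} : Finset X) := h ▸ (Finset.mem_insert_of_mem hx)
  rw [Finset.mem_singleton] at this
  exact (not_mem_of_mem_parts ha hb) (this ▸ hx)

lemma rest_extBlock (ha : a ∉ s) (π : Finpartition s) {b : Finset X} (hb : b ∈ π.parts) :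
    rest a ha (extBlock a ha π b) = π := by
  apply Finpartition.ext
  ext c
  rw [mem_rest_parts]
  constructor
  · rintro ⟨d, hd, hda, rfl⟩
    rw [extBlock_parts ha π hb, Finset.mem_insert] at hd
    rcases hd with rfl | hd
    · rwa [Finset.erase_insert (not_mem_of_mem_parts ha hb)]
    · have hd' := Finset.mem_of_mem_erase hd
      rwa [Finset.erase_eq_of_notMem (not_mem_of_mem_parts ha hd')]
  · intro hc
    by_cases hcb : c = b
    · subst hcb
      exact ⟨insert a c, by rw [extBlock_parts ha π hb]; exact mem_insert_self _ _,
        insert_ne_singleton ha hb, Finset.erase_insert (not_mem_of_mem_parts ha hc)⟩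
    · refine ⟨c, ?_, fun h => singleton_not_mem_parts ha π (h ▸ hc),
        Finset.erase_eq_of_notMem (not_mem_of_mem_parts ha hc)⟩
      rw [extBlock_parts ha π hb]
      exact Finset.mem_insert_of_mem (Finset.mem_erase.2 ⟨hcb, hc⟩)

lemma extSingle_rest (ha : a ∉ s) (π' : Finpartition (insert a s))
    (h : π'.part a = {a}) : extSingle a ha (rest a ha π') = π' := by
  have haa : a ∈ insert a s := mem_insert_self a s
  apply Finpartition.ext
  rw [extSingle_parts]
  ext c
  constructor
  · intro hc
    rcases Finset.mem_insert.1 hc with rfl | hc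
    · exact h ▸ π'.part_mem.2 haa
    · rw [mem_rest_parts] at hc
      obtain ⟨d, hd, hda, rfl⟩ := hc
      have had : a ∉ d := fun had =>
        hda ((Finpartition.part_eq_of_mem π' hd had) ▸ h)
      rwa [Finset.erase_eq_of_notMem had]
  · intro hc
    by_cases hca : c = {a}
    · exact hca ▸ mem_insert_self _ _
    · refine Finset.mem_insert_of_mem ((mem_rest_parts ha π' c).2 ⟨c, hc, hca, ?_⟩)
      have had : a ∉ c := fun had => hca (Finpartition.part_eq_of_mem π' hc had ▸ h)
      exact Finset.erase_eq_of_notMem had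

lemma erase_part_mem_rest (ha : a ∉ s) (π' : Finpartition (insert a s))
    (h : π'.part a ≠ {a}) : (π'.part a).erase a ∈ (rest a ha π').parts :=
  (mem_rest_parts ha π' _).2 ⟨π'.part a, π'.part_mem.2 (mem_insert_self a s), h, rfl⟩

lemma extBlock_rest (ha : a ∉ s) (π' : Finpartition (insert a s))
    (h : π'.part a ≠ {a}) :
    extBlock a ha (rest a ha π') ((π'.part a).erase a) = π' := by
  have haa : a ∈ insert a s := mem_insert_self a s
  have hB : π'.part a ∈ π'.parts := π'.part_mem.2 haa
  have haB : a ∈ π'.part a := π'.mem_part haa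
  apply Finpartition.ext
  rw [extBlock_parts ha _ (erase_part_mem_rest ha π' h), Finset.insert_erase haB]
  ext c
  constructor
  · intro hc
    rcases Finset.mem_insert.1 hc with rfl | hc
    · exact hB
    · obtain ⟨hne, hc⟩ := Finset.mem_erase.1 hc
      rw [mem_rest_parts] at hc
      obtain ⟨d, hd, hda, rfl⟩ := hc
      have : d ≠ π'.part a := by
        rintro rfl
        exact hne rfl
      have had : a ∉ d := fun had => this (Finpartition.part_eq_of_mem π' hd had).symm
      rwa [Finset.erase_eq_of_notMem had]
  · intro hc
    by_cases hcB : c = π'.part a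
    · exact hcB ▸ mem_insert_self _ _
    · have had : a ∉ c := fun had => hcB (Finpartition.part_eq_of_mem π' hc had).symm
      refine Finset.mem_insert_of_mem (Finset.mem_erase.2 ⟨?_, ?_⟩)
      · intro hce
        have hsub : c ⊆ π'.part a := hce ▸ Finset.erase_subset a (π'.part a)
        have : Disjoint c (π'.part a) := π'.disjoint hc hB hcB
        obtain ⟨x, hx⟩ := π'.nonempty_of_mem_parts hc
        exact (Finset.disjoint_left.1 this) hx (hsub hx)
      · exact (mem_rest_parts ha π' c).2
          ⟨c, hc, fun hch => had (hch ▸ mem_singleton_self a),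
            Finset.erase_eq_of_notMem had⟩

/-- The Ewens/Pitman normalization over all finpartitions of a finset. -/
lemma ewens (u y : ℝ) : ∀ s : Finset X,
    (∑ π : Finpartition s, risingFactorial u π.parts.card *
      ∏ b ∈ π.parts, -risingFactorial (-y) b.card) =
    ∏ i ∈ Finset.range s.card, (u * y + i) := by
  intro s
  induction s using Finset.induction_on with
  | empty =>
    have h1 : ∀ π : Finpartition (∅ : Finset X), π.parts = ∅ := fun π =>
      Finpartition.parts_eq_empty_iff.mpr Finset.bot_eq_empty.symm
    have h2 : (Finset.univ : Finset (Finpartition (∅ : Finset X))) = {⊥} := by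
      apply Finset.eq_singleton_iff_unique_mem.2
      exact ⟨Finset.mem_univ _, fun π _ => Finpartition.ext (by rw [h1, h1])⟩
    rw [h2, Finset.sum_singleton, h1]
    simp [risingFactorial]
  | @insert a s ha ih =>
    classical
    rw [Finset.card_insert_of_notMem ha, Finset.prod_range_succ, ← ih]
    rw [← Finset.sum_filter_add_sum_filter_not Finset.univ
        (fun π' : Finpartition (insert a s) => π'.part a = {a})]
    have key1 : (∑ π' ∈ Finset.univ.filter
          (fun π' : Finpartition (insert a s) => π'.part a = {a}),
        risingFactorial u π'.parts.card * ∏ b ∈ π'.parts, -risingFactorial (-y) b.card) =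
        ∑ π : Finpartition s, ((u + π.parts.card) * y) *
          (risingFactorial u π.parts.card * ∏ b ∈ π.parts, -risingFactorial (-y) b.card) := by
      refine Finset.sum_nbij' (rest a ha) (extSingle a ha) (fun _ _ => Finset.mem_univ _)
        (fun π _ => Finset.mem_filter.2 ⟨Finset.mem_univ _, part_extSingle ha π⟩)
        (fun π' hπ' => extSingle_rest ha π' (Finset.mem_filter.1 hπ').2)
        (fun π _ => rest_extSingle ha π) ?_
      intro π' hπ'
      conv_lhs => rw [← extSingle_rest ha π' (Finset.mem_filter.1 hπ').2]
      generalize rest a ha π' = π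
      have hs : ({a} : Finset X) ∉ π.parts := singleton_not_mem_parts ha π
      rw [extSingle_parts, Finset.card_insert_of_notMem hs, Finset.prod_insert hs,
        Finset.card_singleton, risingFactorial_one, risingFactorial_succ]
      push_cast
      ring
    have key2 : (∑ π' ∈ Finset.univ.filter
          (fun π' : Finpartition (insert a s) => ¬π'.part a = {a}),
        risingFactorial u π'.parts.card * ∏ b ∈ π'.parts, -risingFactorial (-y) b.card) =
        ∑ π : Finpartition s, ((s.card : ℝ) - π.parts.card * y) *
          (risingFactorial u π.parts.card * ∏ b ∈ π.parts, -risingFactorial (-y) b.card) := by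
      rw [← Finset.sum_fiberwise_of_maps_to (g := rest a ha)
        (fun π' _ => Finset.mem_univ _) _]
      refine Finset.sum_congr rfl fun π _ => ?_
      have inner : (∑ π' ∈ (Finset.univ.filter
            (fun π' : Finpartition (insert a s) => ¬π'.part a = {a})).filter
            (fun π' => rest a ha π' = π),
          risingFactorial u π'.parts.card * ∏ b ∈ π'.parts, -risingFactorial (-y) b.card) =
          ∑ b ∈ π.parts, ((b.card : ℝ) - y) *
            (risingFactorial u π.parts.card * ∏ c ∈ π.parts, -risingFactorial (-y) c.card) := by
        refine Finset.sum_nbij' (fun π' => (π'.part a).erase a) (extBlock a ha π) ?_ ?_ ?_ ?_ ?_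
        · intro π' hπ'
          obtain ⟨h1, h2⟩ := Finset.mem_filter.1 hπ'
          have h3 := (Finset.mem_filter.1 h1).2
          have := erase_part_mem_rest ha π' h3
          rwa [h2] at this
        · intro b hb
          refine Finset.mem_filter.2 ⟨Finset.mem_filter.2 ⟨Finset.mem_univ _, ?_⟩,
            rest_extBlock ha π hb⟩
          rw [part_extBlock ha π hb]
          exact insert_ne_singleton ha hb
        · intro π' hπ'
          obtain ⟨h1, h2⟩ := Finset.mem_filter.1 hπ'
          have h3 := (Finset.mem_filter.1 h1).2
          rw [← h2]
          exact extBlock_rest ha π' h3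
        · intro b hb
          beta_reduce
          rw [part_extBlock ha π hb,
            Finset.erase_insert (not_mem_of_mem_parts ha hb)]
        · intro π' hπ'
          obtain ⟨h1, h2⟩ := Finset.mem_filter.1 hπ'
          have h3 := (Finset.mem_filter.1 h1).2
          beta_reduce
          have hleft : extBlock a ha π ((π'.part a).erase a) = π' := by
            rw [← h2]; exact extBlock_rest ha π' h3
          have hb : (π'.part a).erase a ∈ π.parts := by
            have := erase_part_mem_rest ha π' h3
            rwa [h2] at this
          conv_lhs => rw [← hleft]
          set b := (π'.part a).erase a with hbdef
          have hnab : a ∉ b := not_mem_of_mem_parts ha hb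
          have hnmem : insert a b ∉ π.parts.erase b := by
            intro hmem
            exact (not_mem_of_mem_parts ha (Finset.mem_of_mem_erase hmem))
              (Finset.mem_insert_self a b)
          rw [extBlock_parts ha π hb, Finset.card_insert_of_notMem hnmem,
            Finset.card_erase_add_one hb, Finset.prod_insert hnmem,
            Finset.card_insert_of_notMem hnab, risingFactorial_succ,
            ← Finset.mul_prod_erase π.parts _ hb]
          push_cast
          ring
      rw [inner, ← Finset.sum_mul, Finset.sum_sub_distrib, Finset.sum_const,
        ← Nat.cast_sum, π.sum_card_parts, nsmul_eq_mul]
    rw [key1, key2, ← Finset.sum_add_distrib]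
    rw [show (∑ π : Finpartition s,
        (((u + π.parts.card) * y) *
          (risingFactorial u π.parts.card * ∏ b ∈ π.parts, -risingFactorial (-y) b.card) +
        ((s.card : ℝ) - π.parts.card * y) *
          (risingFactorial u π.parts.card * ∏ b ∈ π.parts, -risingFactorial (-y) b.card))) =
        ∑ π : Finpartition s, (u * y + (s.card : ℝ)) *
          (risingFactorial u π.parts.card * ∏ b ∈ π.parts, -risingFactorial (-y) b.card)
      from Finset.sum_congr rfl fun π _ => by ring]
    rw [← Finset.mul_sum]
    ring


variable {γ : Type*} [Fintype γ] [DecidableEq γ]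

lemma filter_part_eq (ρ : Finpartition (univ : Finset γ)) {c : Finset γ} (hc : c ∈ ρ.parts) :
    (univ.filter fun x => ρ.part x = c) = c := by
  ext x
  simp only [mem_filter, mem_univ, true_and]
  constructor
  · rintro rfl
    exact ρ.mem_part (mem_univ x)
  · intro hx
    exact ρ.part_eq_of_mem hc hx

lemma perm_count (ρ : Finpartition (univ : Finset γ)) (g : γ → Finset γ)
    (h1 : ∀ i, g i ∈ ρ.parts)
    (h2 : ∀ c ∈ ρ.parts, (univ.filter fun i => g i = c).card = c.card) :
    (univ.filter fun σ : Equiv.Perm γ => ∀ i, σ i ∈ g i).card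
      = ∏ c ∈ ρ.parts, Nat.factorial c.card := by
  classical
  rw [← Fintype.card_subtype]
  have hcard : ∀ c : {c // c ∈ ρ.parts},
      Fintype.card {i // g i = (c : Finset γ)} = Fintype.card {x // x ∈ (c : Finset γ)} := by
    intro c
    rw [Fintype.card_subtype, h2 c.1 c.2, Fintype.card_coe]
  have key : ∀ (e : ∀ c : {c // c ∈ ρ.parts},
        {i // g i = (c : Finset γ)} ≃ {x // x ∈ (c : Finset γ)})
      (c c' : {c // c ∈ ρ.parts}), c = c' → ∀ x (hx : g x = (c : Finset γ))
      (hx' : g x = (c' : Finset γ)),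
      ((e c ⟨x, hx⟩ : {x // x ∈ (c : Finset γ)}) : γ)
        = ((e c' ⟨x, hx'⟩ : {x // x ∈ (c' : Finset γ)}) : γ) := by
    rintro e c c' rfl x hx hx'
    rfl
  have E : {σ : Equiv.Perm γ // ∀ i, σ i ∈ g i} ≃
      (∀ c : {c // c ∈ ρ.parts}, {i // g i = (c : Finset γ)} ≃ {x // x ∈ (c : Finset γ)}) := by
    refine
      { toFun := fun σ c => Equiv.ofBijective
          (fun i => ⟨σ.1 i.1, by have h := σ.2 i.1; rwa [i.2] at h⟩)
          ((Fintype.bijective_iff_injective_and_card _).2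
            ⟨fun i i' h => Subtype.ext (σ.1.injective (congrArg Subtype.val h)), hcard c⟩)
        invFun := fun e => ?_
        left_inv := ?_
        right_inv := ?_ }
    · -- build the permutation from the family of bijections
      have hF : ∀ i : γ, ((e ⟨g i, h1 i⟩ ⟨i, rfl⟩ : {x // x ∈ g i}) : γ) ∈ g i := fun i =>
        (e ⟨g i, h1 i⟩ ⟨i, rfl⟩).2
      have hinj : Function.Injective
          (fun i => ((e ⟨g i, h1 i⟩ ⟨i, rfl⟩ : {x // x ∈ g i}) : γ)) := by
        intro i i' h
        dsimp only at h
        have hmem : ((e ⟨g i, h1 i⟩ ⟨i, rfl⟩ : {x // x ∈ g i}) : γ) ∈ g i := hF i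
        have hmem' : ((e ⟨g i, h1 i⟩ ⟨i, rfl⟩ : {x // x ∈ g i}) : γ) ∈ g i' := h ▸ hF i'
        have hgg : g i' = g i := ρ.eq_of_mem_parts (h1 i') (h1 i) hmem' hmem
        have hstep := key e ⟨g i', h1 i'⟩ ⟨g i, h1 i⟩ (Subtype.ext hgg) i' rfl hgg
        rw [hstep] at h
        have := (e ⟨g i, h1 i⟩).injective (Subtype.ext h)
        exact congrArg Subtype.val this
      exact ⟨Equiv.ofBijective _ ((Finite.injective_iff_bijective).1 hinj), fun i => hF i⟩
    · intro σ
      exact Subtype.ext (Equiv.ext fun i => rfl)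
    · intro e
      funext c
      apply Equiv.ext
      rintro ⟨i, hi⟩
      apply Subtype.ext
      obtain ⟨c, hc⟩ := c
      dsimp only at hi
      subst hi
      rfl
  rw [Fintype.card_congr E, Fintype.card_pi]
  rw [← Finset.prod_coe_sort ρ.parts (fun c => Nat.factorial c.card)]
  refine Finset.prod_congr rfl fun c _ => ?_
  rw [Fintype.card_equiv (Fintype.equivOfCardEq (hcard c)), Fintype.card_subtype, h2 c.1 c.2]

lemma count_mul_factorial (ρ : Finpartition (univ : Finset γ)) :
    ((univ.filter fun g : γ → Finset γ => (∀ i, g i ∈ ρ.parts) ∧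
        ∀ c ∈ ρ.parts, (univ.filter fun i => g i = c).card = c.card).card)
      * ∏ c ∈ ρ.parts, Nat.factorial c.card = Nat.factorial (Fintype.card γ) := by
  classical
  have hmaps : ∀ σ : Equiv.Perm γ, σ ∈ (univ : Finset (Equiv.Perm γ)) →
      (fun i => ρ.part (σ i)) ∈ (univ.filter fun g : γ → Finset γ => (∀ i, g i ∈ ρ.parts) ∧
        ∀ c ∈ ρ.parts, (univ.filter fun i => g i = c).card = c.card) := by
    intro σ _
    refine mem_filter.2 ⟨mem_univ _, fun i => ρ.part_mem.2 (mem_univ _), fun c hc => ?_⟩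
    have : (univ.filter fun i => ρ.part (σ i) = c).card
        = (univ.filter fun x => ρ.part x = c).card := by
      refine Finset.card_nbij' σ σ.symm ?_ ?_ ?_ ?_ <;>
        simp [mem_filter, Set.MapsTo, Set.LeftInvOn, Set.RightInvOn]
    rw [this, filter_part_eq ρ hc]
  have hcount := Finset.card_eq_sum_card_fiberwise hmaps
  rw [Finset.card_univ, Fintype.card_perm] at hcount
  rw [hcount]
  have hfib : ∀ g ∈ (univ.filter fun g : γ → Finset γ => (∀ i, g i ∈ ρ.parts) ∧
        ∀ c ∈ ρ.parts, (univ.filter fun i => g i = c).card = c.card),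
      (univ.filter fun σ : Equiv.Perm γ => (fun i => ρ.part (σ i)) = g).card
        = ∏ c ∈ ρ.parts, Nat.factorial c.card := by
    intro g hg
    obtain ⟨-, hg1, hg2⟩ := mem_filter.1 hg
    rw [show (univ.filter fun σ : Equiv.Perm γ => (fun i => ρ.part (σ i)) = g)
        = (univ.filter fun σ : Equiv.Perm γ => ∀ i, σ i ∈ g i) from ?_]
    · exact perm_count ρ g hg1 hg2
    · ext σ
      simp only [mem_filter, mem_univ, true_and, funext_iff]
      constructor
      · intro h i
        rw [← h i]
        exact ρ.mem_part (mem_univ _)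
      · intro h i
        exact ρ.part_eq_of_mem (hg1 i) (h i)
  rw [Finset.sum_congr rfl hfib, Finset.sum_const, smul_eq_mul]


section TraceMachinery

variable {n j : ℕ}

/-- The type-`z` trace of a block. -/
def tr (z : Fin j) (b : Finset (Fin n × Fin j)) : Finset (Fin n) :=
  (b.filter fun p => p.2 = z).image Prod.fst

lemma mem_tr {z : Fin j} {b : Finset (Fin n × Fin j)} {i : Fin n} :
    i ∈ tr z b ↔ (i, z) ∈ b := by
  simp only [tr, mem_image, mem_filter]
  constructor
  · rintro ⟨⟨p1, p2⟩, ⟨hp, hz⟩, rfl⟩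
    dsimp only at hz ⊢
    subst hz
    exact hp
  · intro h
    exact ⟨(i, z), ⟨h, rfl⟩, rfl⟩

lemma tr_card (z : Fin j) (b : Finset (Fin n × Fin j)) :
    (tr z b).card = (b.filter fun p => p.2 = z).card := by
  apply Finset.card_image_of_injOn
  intro p hp q hq h
  obtain ⟨-, hp2⟩ := mem_filter.1 hp
  obtain ⟨-, hq2⟩ := mem_filter.1 hq
  exact Prod.ext h (hp2.trans hq2.symm)

/-- The setoid identifying first coordinates whose `z`-copies share a block. -/
def trSetoid (z : Fin j) (π : Finpartition (univ : Finset (Fin n × Fin j))) :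
    Setoid (Fin n) where
  r i i' := π.part (i, z) = π.part (i', z)
  iseqv := ⟨fun _ => rfl, Eq.symm, Eq.trans⟩

instance (z : Fin j) (π : Finpartition (univ : Finset (Fin n × Fin j))) :
    DecidableRel (trSetoid z π).r := fun _ _ => decEq _ _

/-- The trace finpartition on first coordinates. -/
def traceR (z : Fin j) (π : Finpartition (univ : Finset (Fin n × Fin j))) :
    Finpartition (univ : Finset (Fin n)) :=
  Finpartition.ofSetoid (trSetoid z π)

lemma part_traceR (z : Fin j) (π : Finpartition (univ : Finset (Fin n × Fin j))) (i : Fin n) :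
    (traceR z π).part i = tr z (π.part (i, z)) := by
  ext x
  rw [mem_tr, traceR, Finpartition.mem_part_ofSetoid_iff_rel]
  show π.part (i, z) = π.part (x, z) ↔ _
  rw [π.mem_part_iff_part_eq_part (mem_univ _) (mem_univ _), eq_comm]

/-- The kernel setoid of `f` viewed on pairs. -/
def decSetoid (f : Fin j → Fin n → Finset (Fin n)) : Setoid (Fin n × Fin j) where
  r p q := f p.2 p.1 = f q.2 q.1
  iseqv := ⟨fun _ => rfl, Eq.symm, Eq.trans⟩

instance (f : Fin j → Fin n → Finset (Fin n)) : DecidableRel (decSetoid (n := n) f).r :=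
  fun _ _ => decEq _ _

/-- A partition of `univ` built from the kernel of a function. -/
def decodeP (f : Fin j → Fin n → Finset (Fin n)) :
    Finpartition (univ : Finset (Fin n × Fin j)) :=
  Finpartition.ofSetoid (decSetoid f)

lemma part_decodeP (f : Fin j → Fin n → Finset (Fin n)) (p : Fin n × Fin j) :
    (decodeP f).part p = univ.filter fun q => f q.2 q.1 = f p.2 p.1 := by
  ext q
  rw [decodeP, Finpartition.mem_part_ofSetoid_iff_rel, mem_filter]
  show f p.2 p.1 = f q.2 q.1 ↔ _
  simp [eq_comm]

variable {α : Type*} [Fintype α] [DecidableEq α]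

lemma parts_eq_image_part (P : Finpartition (univ : Finset α)) :
    P.parts = univ.image P.part := by
  ext c
  simp only [mem_image, mem_univ, true_and]
  constructor
  · intro hc
    obtain ⟨x, hx⟩ := P.nonempty_of_mem_parts hc
    exact ⟨x, P.part_eq_of_mem hc hx⟩
  · rintro ⟨x, rfl⟩
    exact P.part_mem.2 (mem_univ x)

lemma ext_part {P Q : Finpartition (univ : Finset α)} (h : ∀ i, P.part i = Q.part i) :
    P = Q := by
  apply Finpartition.ext
  rw [parts_eq_image_part P, parts_eq_image_part Q]
  exact Finset.image_congr fun x _ => h x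

lemma exists_part_eq (P : Finpartition (univ : Finset α)) {b : Finset α}
    (hb : b ∈ P.parts) : ∃ x, P.part x = b := by
  obtain ⟨x, hx⟩ := P.nonempty_of_mem_parts hb
  exact ⟨x, P.part_eq_of_mem hb hx⟩

lemma mem_iff_part_eq (P : Finpartition (univ : Finset α)) {c : Finset α}
    (hc : c ∈ P.parts) (x : α) : x ∈ c ↔ P.part x = c := by
  conv_lhs => rw [← filter_part_eq P hc]
  simp

lemma card_filter_mk_mem {t : Fin j} {b : Finset (Fin n × Fin j)} :
    (univ.filter fun i : Fin n => (i, t) ∈ b).card = (b.filter fun p => p.2 = t).card := by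
  refine Finset.card_nbij' (fun i => (i, t)) Prod.fst ?_ ?_ ?_ ?_
  · intro i hi
    exact mem_filter.2 ⟨(mem_filter.1 hi).2, rfl⟩
  · intro p hp
    obtain ⟨hp1, hp2⟩ := mem_filter.1 hp
    refine mem_filter.2 ⟨mem_univ _, ?_⟩
    have : (p.1, t) = p := Prod.ext rfl hp2.symm
    rwa [this]
  · intro i _
    rfl
  · intro p hp
    obtain ⟨-, hp2⟩ := mem_filter.1 hp
    beta_reduce
    exact Prod.ext rfl hp2.symm

end TraceMachinery

section Balanced

variable {n j : ℕ}

lemma block_card_eq (π : Finpartition (univ : Finset (Fin n × Fin j))) (hbal : IsBalanced π)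
    {b : Finset (Fin n × Fin j)} (hb : b ∈ π.parts) (t : Fin j) :
    b.card = j * (b.filter fun p => p.2 = t).card := by
  have h0 : b.card = ∑ t' : Fin j, (b.filter fun p => p.2 = t').card :=
    Finset.card_eq_sum_card_fiberwise (fun p _ => mem_univ p.2)
  rw [h0, Finset.sum_congr rfl fun t' _ => hbal b hb t' t, Finset.sum_const,
    Finset.card_univ, Fintype.card_fin, smul_eq_mul]

lemma filter_snd_nonempty (hj : 1 ≤ j) (π : Finpartition (univ : Finset (Fin n × Fin j)))
    (hbal : IsBalanced π) {b : Finset (Fin n × Fin j)} (hb : b ∈ π.parts) (t : Fin j) :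
    (b.filter fun p => p.2 = t).Nonempty := by
  rw [← Finset.card_pos]
  have hbc : 0 < b.card := Finset.card_pos.2 (π.nonempty_of_mem_parts hb)
  have h := block_card_eq π hbal hb t
  rcases Nat.eq_zero_or_pos (b.filter fun p => p.2 = t).card with h0 | h0
  · rw [h0, Nat.mul_zero] at h
    omega
  · exact h0

lemma block_card_div (hj : 1 ≤ j) (π : Finpartition (univ : Finset (Fin n × Fin j)))
    (hbal : IsBalanced π) {b : Finset (Fin n × Fin j)} (hb : b ∈ π.parts) (t : Fin j) :
    b.card / j = (b.filter fun p => p.2 = t).card := by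
  rw [block_card_eq π hbal hb t]
  exact Nat.mul_div_cancel_left _ (by omega)

lemma tr_mem_traceR (hj : 1 ≤ j) (z : Fin j) (π : Finpartition (univ : Finset (Fin n × Fin j)))
    (hbal : IsBalanced π) {b : Finset (Fin n × Fin j)} (hb : b ∈ π.parts) :
    tr z b ∈ (traceR z π).parts := by
  obtain ⟨p, hp⟩ := filter_snd_nonempty hj π hbal hb z
  obtain ⟨hpb, hpz⟩ := mem_filter.1 hp
  have hpart : π.part (p.1, z) = b := by
    apply π.part_eq_of_mem hb
    have hpe : (p.1, z) = p := Prod.ext rfl hpz.symm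
    rwa [hpe]
  have h2 : tr z b = (traceR z π).part p.1 := by rw [part_traceR, hpart]
  rw [h2]
  exact (traceR z π).part_mem.2 (mem_univ _)

lemma tr_eq_iff (hj : 1 ≤ j) (z : Fin j) (π : Finpartition (univ : Finset (Fin n × Fin j)))
    (hbal : IsBalanced π) {b b' : Finset (Fin n × Fin j)} (hb : b ∈ π.parts)
    (hb' : b' ∈ π.parts) : tr z b = tr z b' ↔ b = b' := by
  constructor
  · intro h
    obtain ⟨p, hp⟩ := filter_snd_nonempty hj π hbal hb z
    obtain ⟨hpb, hpz⟩ := mem_filter.1 hp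
    have hpe : (p.1, z) = p := Prod.ext rfl hpz.symm
    have h1 : p.1 ∈ tr z b := mem_tr.2 (hpe ▸ hpb)
    have h2 : (p.1, z) ∈ b' := mem_tr.1 (h ▸ h1)
    exact π.eq_of_mem_parts hb hb' (hpe ▸ hpb) h2
  · intro h
    rw [h]

/-- The predicate cutting out admissible `t`-th coordinate functions over a base partition. -/
def Qpred (z : Fin j) (ρ : Finpartition (univ : Finset (Fin n))) (t : Fin j)
    (g : Fin n → Finset (Fin n)) : Prop :=
  (∀ i, g i ∈ ρ.parts) ∧ ((∀ c ∈ ρ.parts, (univ.filter fun i => g i = c).card = c.card) ∧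
    (t = z → g = ρ.part))

instance (z : Fin j) (ρ : Finpartition (univ : Finset (Fin n))) (t : Fin j) :
    DecidablePred (Qpred z ρ t) := fun g => by unfold Qpred; infer_instance

/-- Admissible function tuples. -/
def TT (z : Fin j) (ρ : Finpartition (univ : Finset (Fin n))) :
    Finset (Fin j → Fin n → Finset (Fin n)) :=
  Fintype.piFinset fun t => univ.filter (Qpred z ρ t)

/-- The functions with prescribed fibre sizes over a base partition. -/
def Nset (ρ : Finpartition (univ : Finset (Fin n))) : Finset (Fin n → Finset (Fin n)) :=
  univ.filter fun g : Fin n → Finset (Fin n) => (∀ i, g i ∈ ρ.parts) ∧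
    ∀ c ∈ ρ.parts, (univ.filter fun i => g i = c).card = c.card

lemma Nset_card (ρ : Finpartition (univ : Finset (Fin n))) :
    (Nset ρ).card * ∏ c ∈ ρ.parts, Nat.factorial c.card = Nat.factorial n := by
  have h := count_mul_factorial (γ := Fin n) ρ
  rw [Fintype.card_fin] at h
  rw [← h]
  congr 2
  ext g
  simp only [Nset, mem_filter]

/-- Encoding a balanced partition as a tuple of functions. -/
def encode (z : Fin j) (π : Finpartition (univ : Finset (Fin n × Fin j))) :
    Fin j → Fin n → Finset (Fin n) := fun t i => tr z (π.part (i, t))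

lemma encode_mem (hj : 1 ≤ j) (z : Fin j) (ρ : Finpartition (univ : Finset (Fin n)))
    (π : Finpartition (univ : Finset (Fin n × Fin j))) (hbal : IsBalanced π)
    (htr : traceR z π = ρ) : encode z π ∈ TT z ρ := by
  rw [TT, Fintype.mem_piFinset]
  intro t
  refine mem_filter.2 ⟨mem_univ _, ?_, ?_, ?_⟩
  · intro i
    rw [← htr]
    exact tr_mem_traceR hj z π hbal (π.part_mem.2 (mem_univ _))
  · intro c hc
    rw [← htr] at hc
    obtain ⟨i₀, hi₀⟩ := exists_part_eq (traceR z π) hc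
    rw [part_traceR] at hi₀
    have hb₀ : π.part (i₀, z) ∈ π.parts := π.part_mem.2 (mem_univ _)
    have hfe : (univ.filter fun i => encode z π t i = c)
        = univ.filter fun i => (i, t) ∈ π.part (i₀, z) := by
      apply filter_congr
      intro i _
      rw [← hi₀]
      show tr z (π.part (i, t)) = tr z (π.part (i₀, z)) ↔ _
      rw [tr_eq_iff hj z π hbal (π.part_mem.2 (mem_univ _)) hb₀]
      constructor
      · intro h
        exact h ▸ π.mem_part (mem_univ _)
      · intro h
        exact π.part_eq_of_mem hb₀ h
    rw [hfe, card_filter_mk_mem, hbal _ hb₀ t z, ← tr_card, hi₀]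
  · intro ht
    funext i
    show tr z (π.part (i, t)) = ρ.part i
    rw [ht, ← part_traceR, htr]

lemma decode_mem (z : Fin j) (ρ : Finpartition (univ : Finset (Fin n)))
    (f : Fin j → Fin n → Finset (Fin n)) (hf : f ∈ TT z ρ) :
    IsBalanced (decodeP f) ∧ traceR z (decodeP f) = ρ := by
  rw [TT, Fintype.mem_piFinset] at hf
  have hf1 : ∀ t i, f t i ∈ ρ.parts := fun t i => ((mem_filter.1 (hf t)).2).1 i
  have hf2 : ∀ t, ∀ c ∈ ρ.parts, (univ.filter fun i => f t i = c).card = c.card :=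
    fun t => ((mem_filter.1 (hf t)).2).2.1
  have hf3 : f z = ρ.part := ((mem_filter.1 (hf z)).2).2.2 rfl
  constructor
  · intro b hb t t'
    obtain ⟨p, hp⟩ := exists_part_eq (decodeP f) hb
    have key : ∀ s : Fin j, (univ.filter fun i : Fin n => (i, s) ∈ b).card
        = (f p.2 p.1).card := by
      intro s
      have h1 : (univ.filter fun i : Fin n => (i, s) ∈ b)
          = univ.filter fun i => f s i = f p.2 p.1 := by
        apply filter_congr
        intro i _
        rw [← hp, part_decodeP]
        simp only [mem_filter, mem_univ, true_and]
      rw [h1, hf2 s _ (hf1 p.2 p.1)]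
    rw [← card_filter_mk_mem, ← card_filter_mk_mem, key t, key t']
  · apply ext_part
    intro i
    rw [part_traceR]
    ext x
    rw [mem_tr, part_decodeP]
    simp only [mem_filter, mem_univ, true_and]
    show f z x = f z i ↔ _
    rw [hf3]
    exact (ρ.mem_part_iff_part_eq_part (mem_univ x) (mem_univ i)).symm

lemma decode_encode (hj : 1 ≤ j) (z : Fin j)
    (π : Finpartition (univ : Finset (Fin n × Fin j))) (hbal : IsBalanced π) :
    decodeP (encode z π) = π := by
  apply ext_part
  intro p
  rw [part_decodeP]
  have h1 : (univ.filter fun q : Fin n × Fin j =>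
        encode z π q.2 q.1 = encode z π p.2 p.1)
      = univ.filter fun q => π.part q = π.part p := by
    apply filter_congr
    intro q _
    show tr z (π.part q) = tr z (π.part p) ↔ _
    exact tr_eq_iff hj z π hbal (π.part_mem.2 (mem_univ _)) (π.part_mem.2 (mem_univ _))
  rw [h1, filter_part_eq π (π.part_mem.2 (mem_univ p))]

lemma encode_decode (z : Fin j) (ρ : Finpartition (univ : Finset (Fin n)))
    (f : Fin j → Fin n → Finset (Fin n)) (hf : f ∈ TT z ρ) :
    encode z (decodeP f) = f := by
  rw [TT, Fintype.mem_piFinset] at hf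
  have hf1 : ∀ t i, f t i ∈ ρ.parts := fun t i => ((mem_filter.1 (hf t)).2).1 i
  have hf3 : f z = ρ.part := ((mem_filter.1 (hf z)).2).2.2 rfl
  funext t i
  show tr z ((decodeP f).part (i, t)) = f t i
  ext x
  rw [mem_tr, part_decodeP]
  simp only [mem_filter, mem_univ, true_and]
  show f z x = f t i ↔ _
  rw [hf3]
  exact (mem_iff_part_eq ρ (hf1 t i) x).symm

lemma card_TT (z : Fin j) (ρ : Finpartition (univ : Finset (Fin n))) :
    (TT z ρ).card = (Nset ρ).card ^ (j - 1) := by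
  rw [TT, Fintype.card_piFinset, ← Finset.prod_erase_mul univ _ (mem_univ z)]
  have hz : (univ.filter (Qpred z ρ z)) = {ρ.part} := by
    ext g
    simp only [mem_filter, mem_univ, true_and, mem_singleton]
    constructor
    · rintro ⟨-, -, h⟩
      exact h rfl
    · rintro rfl
      refine ⟨fun i => ρ.part_mem.2 (mem_univ _), fun c hc => ?_, fun _ => rfl⟩
      rw [filter_part_eq ρ hc]
  rw [hz, card_singleton, mul_one]
  have ht : ∀ t ∈ univ.erase z, (univ.filter (Qpred z ρ t)).card = (Nset ρ).card := by
    intro t htz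
    have h1 : univ.filter (Qpred z ρ t) = Nset ρ := by
      unfold Nset
      apply filter_congr
      intro g _
      unfold Qpred
      constructor
      · rintro ⟨h1, h2, -⟩
        exact ⟨h1, h2⟩
      · rintro ⟨h1, h2⟩
        exact ⟨h1, h2, fun hh => absurd hh (mem_erase.1 htz).1⟩
    rw [h1]
  rw [Finset.prod_congr rfl ht, Finset.prod_const, card_erase_of_mem (mem_univ z),
    card_univ, Fintype.card_fin]

end Balanced


end CRP

/-- Normalization of the balanced Chinese restaurant process distribution: the weights
`(θ/α)^{↑#π} ∏_{b∈π} [−(−α/j)^{↑(#b/j)}]((#b/j)!)^{j−1}` on `j`-balanced set partitions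
of `{1,…,n} × {1,…,j}` sum to `(θ/j)^{↑n}(n!)^{j−1}`. -/
theorem balanced_crp_normalization (n j : ℕ) (hn : 1 ≤ n) (hj : 1 ≤ j)
    (α : ℝ) (hα : α ≠ 0) (θ : ℝ) :
    ∑ π ∈ (Finset.univ : Finset (Finpartition (Finset.univ : Finset (Fin n × Fin j)))).filter
        (fun π => IsBalanced π),
      risingFactorial (θ / α) π.parts.card *
        ∏ b ∈ π.parts,
          (-(risingFactorial (-(α / j)) (b.card / j))) *
            (Nat.factorial (b.card / j) : ℝ) ^ (j - 1) =
    risingFactorial (θ / j) n * (Nat.factorial n : ℝ) ^ (j - 1) := by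
  classical
  have hjR : (j : ℝ) ≠ 0 := Nat.cast_ne_zero.2 (by omega)
  let z : Fin j := ⟨0, hj⟩
  rw [← Finset.sum_fiberwise_of_maps_to (g := CRP.traceR z) (fun π _ => Finset.mem_univ _) _]
  have main : ∀ ρ : Finpartition (Finset.univ : Finset (Fin n)),
      (∑ π ∈ ((Finset.univ : Finset (Finpartition (Finset.univ : Finset (Fin n × Fin j)))).filter
          (fun π => IsBalanced π)).filter (fun π => CRP.traceR z π = ρ),
        risingFactorial (θ / α) π.parts.card *
          ∏ b ∈ π.parts,
            (-(risingFactorial (-(α / j)) (b.card / j))) *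
              (Nat.factorial (b.card / j) : ℝ) ^ (j - 1)) =
      (Nat.factorial n : ℝ) ^ (j - 1) *
        (risingFactorial (θ / α) ρ.parts.card *
          ∏ c ∈ ρ.parts, -risingFactorial (-(α / j)) c.card) := by
    intro ρ
    have hconst : ∀ π ∈ ((Finset.univ : Finset (Finpartition
          (Finset.univ : Finset (Fin n × Fin j)))).filter
          (fun π => IsBalanced π)).filter (fun π => CRP.traceR z π = ρ),
        (risingFactorial (θ / α) π.parts.card *
          ∏ b ∈ π.parts,
            (-(risingFactorial (-(α / j)) (b.card / j))) *
              (Nat.factorial (b.card / j) : ℝ) ^ (j - 1)) =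
        risingFactorial (θ / α) ρ.parts.card *
          ∏ c ∈ ρ.parts,
            (-(risingFactorial (-(α / j)) c.card)) *
              (Nat.factorial c.card : ℝ) ^ (j - 1) := by
      intro π hπ
      obtain ⟨h1, htr⟩ := Finset.mem_filter.1 hπ
      have hbal : IsBalanced π := (Finset.mem_filter.1 h1).2
      have hinj : Set.InjOn (CRP.tr z) (↑π.parts : Set (Finset (Fin n × Fin j))) := by
        intro b hb b' hb' h
        exact (CRP.tr_eq_iff hj z π hbal (Finset.mem_coe.1 hb) (Finset.mem_coe.1 hb')).1 h
      have hsurj : Set.SurjOn (CRP.tr z) (↑π.parts : Set (Finset (Fin n × Fin j)))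
          (↑(CRP.traceR z π).parts : Set (Finset (Fin n))) := by
        intro c hc
        obtain ⟨i, hi⟩ := CRP.exists_part_eq (CRP.traceR z π) (Finset.mem_coe.1 hc)
        rw [CRP.part_traceR] at hi
        exact ⟨π.part (i, z), Finset.mem_coe.2 (π.part_mem.2 (Finset.mem_univ _)), hi⟩
      have hcard : π.parts.card = ρ.parts.card := by
        rw [← htr]
        exact Finset.card_nbij (CRP.tr z)
          (fun b hb => CRP.tr_mem_traceR hj z π hbal hb) hinj hsurj
      have hprod : (∏ b ∈ π.parts,
            (-(risingFactorial (-(α / j)) (b.card / j))) *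
              (Nat.factorial (b.card / j) : ℝ) ^ (j - 1)) =
          ∏ c ∈ (CRP.traceR z π).parts,
            (-(risingFactorial (-(α / j)) c.card)) *
              (Nat.factorial c.card : ℝ) ^ (j - 1) := by
        refine Finset.prod_nbij (CRP.tr z)
          (fun b hb => CRP.tr_mem_traceR hj z π hbal hb) hinj hsurj ?_
        intro b hb
        have hd : b.card / j = (CRP.tr z b).card := by
          rw [CRP.tr_card, ← CRP.block_card_div hj π hbal hb z]
        rw [hd]
      rw [hcard, hprod, htr]
    rw [Finset.sum_congr rfl hconst, Finset.sum_const, nsmul_eq_mul]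
    have hbij : (((Finset.univ : Finset (Finpartition
          (Finset.univ : Finset (Fin n × Fin j)))).filter
          (fun π => IsBalanced π)).filter (fun π => CRP.traceR z π = ρ)).card
        = (CRP.TT z ρ).card := by
      refine Finset.card_nbij' (CRP.encode z) CRP.decodeP ?_ ?_ ?_ ?_
      · intro π hπ
        obtain ⟨h1, htr⟩ := Finset.mem_filter.1 hπ
        exact CRP.encode_mem hj z ρ π (Finset.mem_filter.1 h1).2 htr
      · intro f hf
        obtain ⟨hb, ht⟩ := CRP.decode_mem z ρ f hf
        exact Finset.mem_filter.2 ⟨Finset.mem_filter.2 ⟨Finset.mem_univ _, hb⟩, ht⟩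
      · intro π hπ
        obtain ⟨h1, htr⟩ := Finset.mem_filter.1 hπ
        exact CRP.decode_encode hj z π (Finset.mem_filter.1 h1).2
      · intro f hf
        exact CRP.encode_decode z ρ f hf
    rw [hbij, CRP.card_TT]
    have hfact : ((CRP.Nset ρ).card : ℝ) * ∏ c ∈ ρ.parts, (Nat.factorial c.card : ℝ)
        = (Nat.factorial n : ℝ) := by
      rw [← Nat.cast_prod, ← Nat.cast_mul, CRP.Nset_card]
    rw [Finset.prod_mul_distrib, Finset.prod_pow]
    push_cast
    rw [← hfact]
    ring
  rw [Finset.sum_congr rfl (fun ρ _ => main ρ), ← Finset.mul_sum]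
  rw [CRP.ewens (θ / α) (α / (j : ℝ)) (Finset.univ : Finset (Fin n))]
  rw [Finset.card_univ, Fintype.card_fin]
  have harg : ∀ i : ℕ, θ / α * (α / (j : ℝ)) + i = θ / (j : ℝ) + i := by
    intro i
    congr 1
    field_simp
  rw [Finset.prod_congr rfl (fun i _ => harg i)]
  rw [show risingFactorial (θ / (j : ℝ)) n = ∏ i ∈ Finset.range n, (θ / (j : ℝ) + i) from rfl]
  ring
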